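/- For all integers 0 ≤ k ≤ n, the number of nondecreasing parking functions of length n+1 whose maximum entry equals k+1 is C_{n,k}. -/
import Mathlib


/-- Catalan's triangle: `C_{n,k} = ((n-k+1)/(n+1)) * binom(n+k, n)` (the division is exact). -/
def catalanTriangle (n k : ℕ) : ℕ := (n - k + 1) * (n + k).choose n / (n + 1)

/-- A nondecreasing parking function of length `m`, written as a monotone function
`a : Fin m → ℕ` of positive integers with `a i ≤ i + 1` (1-based: `a_i ≤ i`). -/
def IsNDParkingFunction (m : ℕ) (a : Fin m → ℕ) : Prop :=
  Monotone a ∧ (∀ i, 1 ≤ a i) ∧ ∀ i : Fin m, a i ≤ (i : ℕ) + 1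

/-- ND parking functions of length `n+1` with last entry exactly `k+1`. -/
abbrev NDP (n k : ℕ) : Type :=
  {a : Fin (n+1) → ℕ // Monotone a ∧ (∀ i, 1 ≤ a i) ∧ (∀ i : Fin (n+1), a i ≤ (i : ℕ) + 1) ∧
    a (Fin.last n) = k + 1}

/-- ND parking functions of length `n+1` with last entry at most `t`. -/
abbrev NDM (n t : ℕ) : Type :=
  {a : Fin (n+1) → ℕ // Monotone a ∧ (∀ i, 1 ≤ a i) ∧ (∀ i : Fin (n+1), a i ≤ (i : ℕ) + 1) ∧
    a (Fin.last n) ≤ t}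

instance (n k : ℕ) : Finite (NDP n k) := by
  apply Finite.of_injective (fun a : NDP n k => fun i : Fin (n+1) =>
    (⟨a.1 i, by have h := a.2.2.2.1 i; have := i.isLt; omega⟩ : Fin (n+2)))
  intro a b hab
  apply Subtype.ext
  funext i
  exact congrArg Fin.val (congrFun hab i)

instance (n t : ℕ) : Finite (NDM n t) := by
  apply Finite.of_injective (fun a : NDM n t => fun i : Fin (n+1) =>
    (⟨a.1 i, by have h := a.2.2.2.1 i; have := i.isLt; omega⟩ : Fin (n+2)))
  intro a b hab
  apply Subtype.ext
  funext i
  exact congrArg Fin.val (congrFun hab i)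

/-- Integer-valued Catalan triangle via a difference of binomials. -/
def Dt (n k : ℕ) : ℤ := ((n + k).choose n : ℤ) - ((n + k).choose (n + 1) : ℤ)

lemma Dt_rec (m j : ℕ) : Dt (m+1) (j+1) = Dt (m+1) j + Dt m (j+1) := by
  unfold Dt
  have h1 : (m+1) + (j+1) = (m+j+1) + 1 := by ring
  have h2 : (m+1) + j = m+j+1 := by ring
  have h3 : m + (j+1) = m+j+1 := by ring
  rw [h1, h2, h3]
  have p1 : (m+j+1+1).choose (m+1) = (m+j+1).choose m + (m+j+1).choose (m+1) :=
    Nat.choose_succ_succ' (m+j+1) m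
  have p2 : (m+j+1+1).choose (m+2) = (m+j+1).choose (m+1) + (m+j+1).choose (m+2) :=
    Nat.choose_succ_succ' (m+j+1) (m+1)
  have e1 : (m+1) + 1 = m + 2 := by ring
  rw [e1, p1, p2]
  push_cast
  ring

lemma Dt_zero (n : ℕ) : Dt n 0 = 1 := by
  simp [Dt, Nat.choose_self, Nat.choose_succ_self]

lemma Dt_top (n : ℕ) : Dt n (n+1) = 0 := by
  unfold Dt
  have h : (n + (n+1)).choose n = (n + (n+1)).choose (n+1) := by
    rw [← Nat.choose_symm (by omega : n ≤ n + (n+1))]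
    congr 1
    omega
  rw [h]; ring

lemma choose_snd_le (n k : ℕ) (hk : k ≤ n) :
    (n + k).choose (n + 1) ≤ (n + k).choose n := by
  have h := Nat.choose_succ_right_eq (n + k) n
  have h2 : n + k - n = k := by omega
  rw [h2] at h
  have hle : (n + k).choose (n+1) * (n+1) ≤ (n + k).choose n * (n+1) := by
    rw [h]
    exact Nat.mul_le_mul_left _ (by omega)
  exact Nat.le_of_mul_le_mul_right hle (by omega)

lemma catalanTriangle_eq (n k : ℕ) (hk : k ≤ n) :
    catalanTriangle n k = (n + k).choose n - (n + k).choose (n + 1) := by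
  unfold catalanTriangle
  set A := (n + k).choose n with hA
  set B := (n + k).choose (n + 1) with hB
  have key : (n - k + 1) * A = (n + 1) * (A - B) := by
    have h := Nat.choose_succ_right_eq (n + k) n
    have h2 : n + k - n = k := by omega
    rw [h2] at h
    have hBA := choose_snd_le n k hk
    rw [Nat.mul_sub]
    have hb : (n + 1) * B = k * A := by rw [hA, hB]; nlinarith [h]
    rw [hb]
    have : (n - k + 1) = (n + 1) - k := by omega
    rw [this, Nat.sub_mul]
  rw [key, Nat.mul_div_cancel_left _ (by omega : 0 < n + 1)]

lemma catalanTriangle_cast (n k : ℕ) (hk : k ≤ n) :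
    (catalanTriangle n k : ℤ) = Dt n k := by
  rw [catalanTriangle_eq n k hk, Dt]
  have := choose_snd_le n k hk
  push_cast [this]
  ring

/-- `NDP n 0` has exactly one element: the constant function 1. -/
lemma card_NDP_zero (n : ℕ) : Nat.card (NDP n 0) = 1 := by
  rw [Nat.card_eq_one_iff_unique]
  constructor
  · constructor
    rintro ⟨a, ha⟩ ⟨b, hb⟩
    apply Subtype.ext
    funext i
    show a i = b i
    have h1 : a i ≤ a (Fin.last n) := ha.1 (Fin.le_last i)
    have h2 : b i ≤ b (Fin.last n) := hb.1 (Fin.le_last i)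
    have := ha.2.1 i; have := hb.2.1 i
    have := ha.2.2.2; have := hb.2.2.2
    omega
  · exact ⟨⟨fun _ => 1, monotone_const, fun _ => le_refl 1, fun i => by simp, rfl⟩⟩

lemma card_NDP_top (n : ℕ) : Nat.card (NDP n (n+1)) = 0 := by
  have : IsEmpty (NDP n (n+1)) := by
    constructor
    rintro ⟨a, ha⟩
    have h1 := ha.2.2.1 (Fin.last n)
    have h2 := ha.2.2.2
    simp [Fin.val_last] at h1
    omega
  exact Nat.card_of_isEmpty

/-- Deleting the (fixed) last entry: `NDP (n+1) j ≃ NDM n (j+1)` when `j ≤ n+1`. -/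
def ndpEquivNDM (n j : ℕ) (hj : j ≤ n + 1) : NDP (n+1) j ≃ NDM n (j+1) where
  toFun a := ⟨a.1 ∘ Fin.castSucc, a.2.1.comp (Fin.strictMono_castSucc.monotone),
    fun i => a.2.2.1 _, fun i => by simpa using a.2.2.2.1 (Fin.castSucc i),
    by
      have := a.2.1 (Fin.le_last (Fin.castSucc (Fin.last n)))
      simp only [Function.comp]
      calc a.1 (Fin.castSucc (Fin.last n)) ≤ a.1 (Fin.last (n+1)) :=
            a.2.1 (Fin.le_last _)
        _ = j + 1 := a.2.2.2.2⟩
  invFun b := ⟨Fin.snoc b.1 (j+1), by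
      intro x y hxy
      rcases Fin.eq_castSucc_or_eq_last y with ⟨y', rfl⟩ | rfl
      · rcases Fin.eq_castSucc_or_eq_last x with ⟨x', rfl⟩ | rfl
        · simp only [Fin.snoc_castSucc]
          exact b.2.1 (by exact_mod_cast hxy)
        · exfalso
          have h := Fin.le_def.mp hxy
          simp only [Fin.val_last, Fin.coe_castSucc] at h
          have := y'.isLt
          omega
      · rcases Fin.eq_castSucc_or_eq_last x with ⟨x', rfl⟩ | rfl
        · simp only [Fin.snoc_castSucc, Fin.snoc_last]
          calc b.1 x' ≤ b.1 (Fin.last n) := b.2.1 (Fin.le_last _)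
            _ ≤ j + 1 := b.2.2.2.2
        · simp,
    by
      intro i
      rcases Fin.eq_castSucc_or_eq_last i with ⟨i', rfl⟩ | rfl
      · simp only [Fin.snoc_castSucc]; exact b.2.2.1 i'
      · simp,
    by
      intro i
      rcases Fin.eq_castSucc_or_eq_last i with ⟨i', rfl⟩ | rfl
      · simp only [Fin.snoc_castSucc, Fin.coe_castSucc]; exact b.2.2.2.1 i'
      · simp only [Fin.snoc_last, Fin.val_last]; omega,
    by simp⟩
  left_inv a := by
    apply Subtype.ext
    funext i
    rcases Fin.eq_castSucc_or_eq_last i with ⟨i', rfl⟩ | rfl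
    · simp
    · simp [a.2.2.2.2]
  right_inv b := by
    apply Subtype.ext
    funext i
    simp

def splitEquiv (n k : ℕ) : NDM n (k+2) ≃ (NDM n (k+1)) ⊕ (NDP n (k+1)) where
  toFun a :=
    if h : a.1 (Fin.last n) ≤ k + 1 then
      Sum.inl ⟨a.1, a.2.1, a.2.2.1, a.2.2.2.1, h⟩
    else
      Sum.inr ⟨a.1, a.2.1, a.2.2.1, a.2.2.2.1, by have := a.2.2.2.2; omega⟩
  invFun x :=
    match x with
    | Sum.inl b => ⟨b.1, b.2.1, b.2.2.1, b.2.2.2.1, by have := b.2.2.2.2; omega⟩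
    | Sum.inr c => ⟨c.1, c.2.1, c.2.2.1, c.2.2.2.1, by have := c.2.2.2.2; omega⟩
  left_inv a := by
    by_cases h : a.1 (Fin.last n) ≤ k + 1
    · simp only [dif_pos h]
    · simp only [dif_neg h]
  right_inv x := by
    match x with
    | Sum.inl b =>
      simp only [dif_pos b.2.2.2.2]
    | Sum.inr c =>
      have hc := c.2.2.2.2
      simp only [dif_neg (show ¬ c.1 (Fin.last n) ≤ k + 1 by omega)]

lemma card_NDM_split (n k : ℕ) :
    Nat.card (NDM n (k+2)) = Nat.card (NDM n (k+1)) + Nat.card (NDP n (k+1)) := by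
  rw [Nat.card_congr (splitEquiv n k), Nat.card_sum]

lemma card_NDP_rec (n k : ℕ) (hk : k ≤ n) :
    Nat.card (NDP (n+1) (k+1)) = Nat.card (NDP (n+1) k) + Nat.card (NDP n (k+1)) := by
  rw [Nat.card_congr (ndpEquivNDM n (k+1) (by omega)),
    Nat.card_congr (ndpEquivNDM n k (by omega))]
  exact card_NDM_split n k

lemma card_NDP_eq_Dt : ∀ n k : ℕ, k ≤ n + 1 → (Nat.card (NDP n k) : ℤ) = Dt n k := by
  intro n
  induction n with
  | zero =>
    intro k hk
    interval_cases k
    · rw [card_NDP_zero, Dt_zero]; norm_num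
    · rw [card_NDP_top 0, Dt_top 0]; norm_num
  | succ n ih =>
    intro k hk
    induction k with
    | zero => rw [card_NDP_zero, Dt_zero]; norm_num
    | succ k ihk =>
      rcases Nat.lt_or_ge k (n+1) with h | h
      · rw [card_NDP_rec n k (by omega), Dt_rec]
        push_cast
        rw [ihk (by omega), ih (k+1) (by omega)]
      · have hk1 : k = n + 1 := by omega
        subst hk1
        rw [card_NDP_top (n+1), Dt_top (n+1)]
        norm_num

/-- The number of nondecreasing parking functions of length `n+1` whose maximum entry
equals `k+1` is `C_{n,k}`. -/
theorem card_ndpf_maxEntry (n k : ℕ) (hk : k ≤ n) :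
    Nat.card {a : Fin (n + 1) → ℕ // IsNDParkingFunction (n + 1) a ∧
        (∀ i, a i ≤ k + 1) ∧ ∃ i, a i = k + 1}
      = catalanTriangle n k := by
  have e : {a : Fin (n + 1) → ℕ // IsNDParkingFunction (n + 1) a ∧
      (∀ i, a i ≤ k + 1) ∧ ∃ i, a i = k + 1} ≃ NDP n k := by
    apply Equiv.subtypeEquivRight
    intro a
    unfold IsNDParkingFunction
    constructor
    · rintro ⟨⟨h1, h2, h3⟩, h4, i, h5⟩
      refine ⟨h1, h2, h3, ?_⟩
      have := h1 (Fin.le_last i)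
      have := h4 (Fin.last n)
      omega
    · rintro ⟨h1, h2, h3, h4⟩
      exact ⟨⟨h1, h2, h3⟩, fun i => h4 ▸ h1 (Fin.le_last i), Fin.last n, h4⟩
  rw [Nat.card_congr e]
  have := card_NDP_eq_Dt n k (by omega)
  have := catalanTriangle_cast n k hk
  omega
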